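/- Let a ∈ ℝ and i, j ∈ ℕ. Then ∫ He_i(z) · He_j(a·z) dγ(z) = j! · a^i · ((a² − 1)/2)^{(j−i)/2} / ((j−i)/2)! whenever j ≥ i and j − i is even, and ∫ He_i(z) · He_j(a·z) dγ(z) = 0 otherwise (i.e., when j < i or j − i is odd). -/

import Mathlib

open MeasureTheory ProbabilityTheory

section Aux

open Polynomial Real
open scoped NNReal ENNReal

noncomputable def J (p : ℝ[X]) : ℝ := ∫ x : ℝ, p.eval x * Real.exp (-x^2/2)

lemma integrable_pow_gauss (n : ℕ) :
    Integrable (fun x : ℝ => x ^ n * Real.exp (-x^2/2)) := by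
  have h := integrable_rpow_mul_exp_neg_mul_sq (b := 1/2) (by norm_num) (s := (n:ℝ))
    (by exact_mod_cast neg_one_lt_zero.trans_le (Nat.cast_nonneg n))
  have e : ∀ x : ℝ, -x^2/2 = -(1/2)*x^2 := fun x => by ring
  simp_rw [Real.rpow_natCast] at h
  simp_rw [e]
  exact h
lemma integrable_poly_gauss (p : ℝ[X]) :
    Integrable (fun x : ℝ => p.eval x * Real.exp (-x^2/2)) := by
  have : (fun x : ℝ => p.eval x * Real.exp (-x^2/2))
      = fun x => ∑ k ∈ Finset.range (p.natDegree + 1),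
          p.coeff k * (x ^ k * Real.exp (-x^2/2)) := by
    funext x
    rw [eval_eq_sum_range, Finset.sum_mul]
    simp [mul_assoc]
  rw [this]
  exact integrable_finset_sum _ fun k _ => (integrable_pow_gauss k).const_mul _




lemma J_add (p q : ℝ[X]) : J (p + q) = J p + J q := by
  unfold J
  simp_rw [eval_add, add_mul]
  exact integral_add (integrable_poly_gauss p) (integrable_poly_gauss q)

lemma J_sub (p q : ℝ[X]) : J (p - q) = J p - J q := by
  unfold J
  simp_rw [eval_sub, sub_mul]
  exact integral_sub (integrable_poly_gauss p) (integrable_poly_gauss q)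

lemma J_C_mul (c : ℝ) (p : ℝ[X]) : J (C c * p) = c * J p := by
  unfold J
  simp_rw [eval_mul, eval_C, mul_assoc]
  exact integral_const_mul c _

lemma J_one : J 1 = Real.sqrt (2 * π) := by
  unfold J
  simp only [eval_one, one_mul]
  have e : ∀ x : ℝ, -x^2/2 = -(1/2)*x^2 := fun x => by ring
  simp_rw [e]
  rw [integral_gaussian]
  rw [show π / (1/2 : ℝ) = 2 * π by ring]

lemma hasDerivAt_gauss (x : ℝ) :
    HasDerivAt (fun x : ℝ => Real.exp (-x^2/2)) (-x * Real.exp (-x^2/2)) x := by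
  have h : HasDerivAt (fun x : ℝ => -x^2/2) (-x) x := by
    have := ((hasDerivAt_pow 2 x).div_const 2).neg
    have e : ∀ y : ℝ, -y^2/2 = -(y^2/2) := fun y => by ring
    simp_rw [e]
    exact this.congr_deriv (by norm_num)
  simpa [mul_comm] using h.exp

lemma stein (p : ℝ[X]) : J (X * p) = J (derivative p) := by
  have hderiv : ∀ x : ℝ, HasDerivAt (fun x : ℝ => p.eval x * Real.exp (-x^2/2))
      (((derivative p - X * p).eval x) * Real.exp (-x^2/2)) x := by
    intro x
    have h := (p.hasDerivAt x).mul (hasDerivAt_gauss x)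
    exact h.congr_deriv (by simp only [eval_sub, eval_mul, eval_X]; ring)
  have h0 := integral_eq_zero_of_hasDerivAt_of_integrable hderiv
    (integrable_poly_gauss (derivative p - X * p)) (integrable_poly_gauss p)
  have := J_sub (derivative p) (X * p)
  unfold J at this ⊢
  rw [h0] at this
  linarith [this]

noncomputable def Hr (n : ℕ) : ℝ[X] := (hermite n).map (Int.castRingHom ℝ)

lemma Hr_zero : Hr 0 = 1 := by simp [Hr, hermite_zero]
lemma Hr_one : Hr 1 = X := by simp [Hr, hermite_one]

lemma Hr_succ (n : ℕ) : Hr (n + 1) = X * Hr n - derivative (Hr n) := by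
  unfold Hr
  rw [hermite_succ, Polynomial.map_sub, Polynomial.map_mul, map_X, derivative_map]

lemma derivative_Hr (n : ℕ) : derivative (Hr (n + 1)) = C ((n : ℝ) + 1) * Hr n := by
  induction n with
  | zero => simp [Hr_one, Hr_zero]
  | succ n ih =>
    rw [Hr_succ (n + 1), derivative_sub, derivative_mul, derivative_X, one_mul, ih]
    rw [derivative_mul, derivative_C, zero_mul, zero_add]
    rw [show Hr (n+1) + X * (C ((n:ℝ)+1) * Hr n) - C ((n:ℝ)+1) * derivative (Hr n)
      = Hr (n+1) + C ((n:ℝ)+1) * (X * Hr n - derivative (Hr n)) by ring, ← Hr_succ n]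
    simp only [Nat.cast_add, Nat.cast_one, C_add, C_1]
    ring

lemma J_zero : J 0 = 0 := by simp [J]

lemma deriv_comp_aX (a : ℝ) (p : ℝ[X]) :
    derivative (p.comp (C a * X)) = C a * (derivative p).comp (C a * X) := by
  rw [derivative_comp, derivative_C_mul, derivative_X, mul_one]

lemma rec_aux (a : ℝ) (i j : ℕ) :
    J (Hr (i+1) * (Hr j).comp (C a * X))
      = a * J (Hr i * (derivative (Hr j)).comp (C a * X)) := by
  set Q := (Hr j).comp (C a * X) with hQ
  have h1 : Hr (i+1) * Q = X * (Hr i * Q) - derivative (Hr i) * Q := by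
    rw [Hr_succ]; ring
  rw [h1, J_sub, stein, derivative_mul, J_add, hQ, deriv_comp_aX]
  rw [show Hr i * (C a * (derivative (Hr j)).comp (C a * X))
    = C a * (Hr i * (derivative (Hr j)).comp (C a * X)) by ring, J_C_mul]
  ring

lemma rec1 (a : ℝ) (i j : ℕ) :
    J (Hr (i+1) * (Hr (j+1)).comp (C a * X))
      = a * ((j:ℝ)+1) * J (Hr i * (Hr j).comp (C a * X)) := by
  rw [rec_aux, derivative_Hr, mul_comp, C_comp]
  rw [show Hr i * (C ((j:ℝ)+1) * (Hr j).comp (C a * X))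
    = C ((j:ℝ)+1) * (Hr i * (Hr j).comp (C a * X)) by ring, J_C_mul]
  ring

lemma rec1' (a : ℝ) (i : ℕ) : J (Hr (i+1) * (Hr 0).comp (C a * X)) = 0 := by
  rw [rec_aux, Hr_zero, derivative_one, zero_comp, mul_zero, J_zero, mul_zero]

lemma rec2_aux (a : ℝ) (j : ℕ) :
    J ((Hr (j+1)).comp (C a * X))
      = (a^2 - 1) * J ((derivative (Hr j)).comp (C a * X)) := by
  rw [Hr_succ, sub_comp, mul_comp, X_comp, J_sub, mul_assoc, J_C_mul, stein,
    deriv_comp_aX, J_C_mul]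
  ring

lemma rec2 (a : ℝ) (j : ℕ) :
    J ((Hr (j+2)).comp (C a * X))
      = (a^2 - 1) * ((j:ℝ)+1) * J ((Hr j).comp (C a * X)) := by
  rw [rec2_aux, derivative_Hr, mul_comp, C_comp, J_C_mul]
  ring

lemma rec2₀ (a : ℝ) : J ((Hr 1).comp (C a * X)) = 0 := by
  rw [show (1:ℕ) = 0 + 1 from rfl, rec2_aux, Hr_zero, derivative_one, zero_comp,
    J_zero, mul_zero]

lemma base (a : ℝ) : J ((Hr 0).comp (C a * X)) = Real.sqrt (2 * π) := by
  rw [Hr_zero, one_comp, J_one]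

noncomputable def F (a : ℝ) (i j : ℕ) : ℝ :=
  if i ≤ j ∧ Even (j - i) then
    (j.factorial : ℝ) * a ^ i * ((a ^ 2 - 1) / 2) ^ ((j - i) / 2) /
      (((j - i) / 2).factorial : ℝ)
  else 0

lemma F1 (a : ℝ) (i j : ℕ) : F a (i+1) (j+1) = a * ((j:ℝ)+1) * F a i j := by
  unfold F
  rw [Nat.succ_sub_succ]
  by_cases h : i ≤ j ∧ Even (j - i)
  · rw [if_pos h, if_pos ⟨Nat.succ_le_succ h.1, h.2⟩, Nat.factorial_succ]
    push_cast
    ring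
  · rw [if_neg h, if_neg (by simpa [Nat.succ_le_succ_iff] using h), mul_zero]

lemma F5 (a : ℝ) (i : ℕ) : F a (i+1) 0 = 0 := by
  unfold F
  rw [if_neg (by simp)]

lemma F3 (a : ℝ) : F a 0 0 = 1 := by simp [F]

lemma F4 (a : ℝ) : F a 0 1 = 0 := by
  unfold F
  rw [if_neg (by simp [Nat.even_iff])]

lemma F2 (a : ℝ) (j : ℕ) : F a 0 (j+2) = (a^2 - 1) * ((j:ℝ)+1) * F a 0 j := by
  unfold F
  simp only [Nat.sub_zero, Nat.zero_le, true_and]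
  by_cases h : Even j
  · rw [if_pos (by rw [Nat.even_add]; simp [h]), if_pos h]
    obtain ⟨m, hm⟩ := h
    have h2 : (j+2)/2 = m + 1 := by omega
    have h3 : j/2 = m := by omega
    rw [h2, h3]
    rw [Nat.factorial_succ (j+1), Nat.factorial_succ j, Nat.factorial_succ m]
    have hj : (j:ℝ) = 2*m := by rw [hm]; push_cast; ring
    push_cast
    rw [hj]
    have hm' : (0:ℝ) < (m.factorial : ℝ) := by exact_mod_cast m.factorial_pos
    have hj' : (0:ℝ) < (j.factorial : ℝ) := by exact_mod_cast j.factorial_pos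
    field_simp
    ring
  · rw [if_neg (by rw [Nat.even_add]; simp [h]), if_neg h, mul_zero]

lemma main_ind (a : ℝ) : ∀ i j : ℕ,
    J (Hr i * (Hr j).comp (C a * X)) = Real.sqrt (2 * π) * F a i j := by
  intro i
  induction i with
  | zero =>
    intro j
    rw [Hr_zero, one_mul]
    induction j using Nat.strong_induction_on with
    | _ j ih =>
      match j with
      | 0 => rw [base, F3, mul_one]
      | 1 => rw [rec2₀, F4, mul_zero]
      | (k+2) =>
        rw [rec2, ih k (by omega), F2]
        ring
  | succ i ihi =>
    intro j
    match j with
    | 0 => rw [rec1', F5, mul_zero]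
    | (k+1) =>
      rw [rec1, ihi k, F1]
      ring

lemma integral_gaussReal_eq (g : ℝ → ℝ) (_hg : Measurable g) :
    ∫ x, g x ∂(gaussianReal 0 1)
      = (Real.sqrt (2 * π))⁻¹ * ∫ x, g x * Real.exp (-x^2/2) := by
  rw [gaussianReal_of_var_ne_zero 0 one_ne_zero]
  have hd : gaussianPDF 0 1 = fun x => ((Real.toNNReal (gaussianPDFReal 0 1 x) : ℝ≥0) : ℝ≥0∞) := by
    funext x; rfl
  rw [hd, integral_withDensity_eq_integral_smul
    ((measurable_gaussianPDFReal 0 1).real_toNNReal) g]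
  have hpdf : ∀ x : ℝ, gaussianPDFReal 0 1 x = (Real.sqrt (2*π))⁻¹ * Real.exp (-x^2/2) := by
    intro x
    unfold gaussianPDFReal
    norm_num
  calc ∫ x, (Real.toNNReal (gaussianPDFReal 0 1 x)) • g x
      = ∫ x, (Real.sqrt (2*π))⁻¹ * (g x * Real.exp (-x^2/2)) := by
        congr 1; funext x
        rw [NNReal.smul_def, Real.coe_toNNReal _ (gaussianPDFReal_nonneg 0 1 x), hpdf x,
          smul_eq_mul]
        ring
    _ = (Real.sqrt (2*π))⁻¹ * ∫ x, g x * Real.exp (-x^2/2) := integral_const_mul _ _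

end Aux

/-- The `n`-th probabilists' Hermite polynomial, as a real function. -/
noncomputable def He (n : ℕ) (x : ℝ) : ℝ :=
  Polynomial.aeval x (Polynomial.hermite n)

open Polynomial in
lemma He_eval (n : ℕ) (x : ℝ) : He n x = (Hr n).eval x := by
  unfold He Hr
  rw [aeval_def, eval₂_eq_eval_map, algebraMap_int_eq]

/-- Hermite coefficients of a scaled Hermite polynomial:
`∫ He_i(z)·He_j(a·z) dγ(z) = j!·a^i·((a²−1)/2)^{(j−i)/2}/((j−i)/2)!` when
`j ≥ i` and `j − i` is even, and `0` otherwise. -/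
theorem stmt14 (a : ℝ) (i j : ℕ) :
    (∫ z, He i z * He j (a * z) ∂(gaussianReal 0 1))
      = if i ≤ j ∧ Even (j - i) then
          (j.factorial : ℝ) * a ^ i * ((a ^ 2 - 1) / 2) ^ ((j - i) / 2) /
            (((j - i) / 2).factorial : ℝ)
        else 0 := by
  have key : (∫ z, He i z * He j (a * z) ∂(gaussianReal 0 1)) = F a i j := by
    set P : Polynomial ℝ := Hr i * (Hr j).comp (Polynomial.C a * Polynomial.X) with hP
    have hfun : (fun z : ℝ => He i z * He j (a * z)) = fun z => P.eval z := by
      funext z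
      simp [hP, He_eval, Polynomial.eval_mul, Polynomial.eval_comp]
    calc (∫ z, He i z * He j (a * z) ∂(gaussianReal 0 1))
        = ∫ z, P.eval z ∂(gaussianReal 0 1) := by rw [hfun]
      _ = (Real.sqrt (2 * Real.pi))⁻¹ * ∫ x, P.eval x * Real.exp (-x^2/2) :=
          integral_gaussReal_eq _ (P.continuous).measurable
      _ = (Real.sqrt (2 * Real.pi))⁻¹ * J P := rfl
      _ = (Real.sqrt (2 * Real.pi))⁻¹ * (Real.sqrt (2 * Real.pi) * F a i j) := by
          rw [main_ind a i j]
      _ = F a i j := by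
          rw [← mul_assoc, inv_mul_cancel₀ (ne_of_gt (Real.sqrt_pos.mpr (by positivity))),
            one_mul]
  rw [key]
  rfl
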